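/- The pair (C, A) is similar to a contractive pair if and only if the Stein inequality H - A_1* H A_1 - ... - A_d* H A_d >= C* C admits a bounded, strictly positive-definite (i.e., invertible positive) solution H. Likewise, (C, A) is similar to an isometric pair if and only if the corresponding Stein equality H - sum_j A_j* H A_j = C* C admits a bounded strictly positive-definite solution. -/

import Mathlib

set_option maxHeartbeats 1000000
set_option synthInstance.maxHeartbeats 1000000

open ContinuousLinearMap

noncomputable section

variable {X Y : Type*}
  [NormedAddCommGroup X] [InnerProductSpace ℂ X] [CompleteSpace X]
  [NormedAddCommGroup Y] [InnerProductSpace ℂ Y] [CompleteSpace Y]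

/-- `A^v`: for a word `v = i_N … i_1` (stored as the list `[i_N, …, i_1]`), the
product `A_{i_N} ∘ A_{i_{N-1}} ∘ ⋯ ∘ A_{i_1}`. -/
def wordProd {d : ℕ} (A : Fin d → X →L[ℂ] X) (v : List (Fin d)) : X →L[ℂ] X :=
  (v.map A).prod

/-- `A^w` for a word of length `N` encoded as a function `w : Fin N → Fin d`. -/
def funProd {d N : ℕ} (A : Fin d → X →L[ℂ] X) (w : Fin N → Fin d) : X →L[ℂ] X :=
  wordProd A (List.ofFn w)

/-- The pair (C', A') is similar to (C, A) via an invertible S: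
C' = C S⁻¹ and A'_j = S A_j S⁻¹. -/
def SimilarTo {d : ℕ} (C : X →L[ℂ] Y) (A : Fin d → X →L[ℂ] X)
    (C' : X →L[ℂ] Y) (A' : Fin d → X →L[ℂ] X) : Prop :=
  ∃ S : X ≃L[ℂ] X, C' = C ∘L (S.symm : X →L[ℂ] X) ∧
    ∀ j, A' j = (S : X →L[ℂ] X) ∘L A j ∘L (S.symm : X →L[ℂ] X)

/-- Key conjugation identity: the "primed" defect operator for the similar pair is the
conjugate by `S⁻¹` of the Stein defect operator with `H = S* S`. -/
lemma key_conj {d : ℕ} (S : X ≃L[ℂ] X) (C : X →L[ℂ] Y) (A : Fin d → X →L[ℂ] X) :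
    (1 : X →L[ℂ] X)
      - ∑ j, adjoint ((S : X →L[ℂ] X) ∘L A j ∘L (S.symm : X →L[ℂ] X)) ∘L
          ((S : X →L[ℂ] X) ∘L A j ∘L (S.symm : X →L[ℂ] X))
      - adjoint (C ∘L (S.symm : X →L[ℂ] X)) ∘L (C ∘L (S.symm : X →L[ℂ] X))
    = adjoint (S.symm : X →L[ℂ] X) ∘L
        ((adjoint (S : X →L[ℂ] X) ∘L (S : X →L[ℂ] X))
          - ∑ j, adjoint (A j) ∘L (adjoint (S : X →L[ℂ] X) ∘L (S : X →L[ℂ] X)) ∘L A j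
          - adjoint C ∘L C) ∘L (S.symm : X →L[ℂ] X) := by
  set s : X →L[ℂ] X := (S : X →L[ℂ] X) with hs_def
  set s' : X →L[ℂ] X := (S.symm : X →L[ℂ] X) with hs'_def
  have h2 : s * s' = 1 := by ext x; simp [hs_def, hs'_def, mul_apply]
  have hadj : adjoint s' * adjoint s = 1 := by
    rw [← star_eq_adjoint, ← star_eq_adjoint, ← star_mul, h2, star_one]
  have hA : ∀ j, adjoint (s ∘L A j ∘L s') ∘L (s ∘L A j ∘L s')
      = adjoint s' * (adjoint (A j) ∘L (adjoint s ∘L s) ∘L A j) * s' := by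
    intro j
    simp only [adjoint_comp, mul_def, comp_assoc]
  have hC : adjoint (C ∘L s') ∘L (C ∘L s')
      = adjoint s' * (adjoint C ∘L C) * s' := by
    simp only [adjoint_comp, mul_def, comp_assoc]
  have h1' : adjoint s' * (adjoint s ∘L s) * s' = 1 := by
    have : adjoint s' * (adjoint s ∘L s) * s'
        = (adjoint s' * adjoint s) * (s * s') := by
      show adjoint s' * (adjoint s * s) * s' = _
      noncomm_ring
    rw [this, hadj, h2, one_mul]
  calc (1 : X →L[ℂ] X)
      - ∑ j, adjoint (s ∘L A j ∘L s') ∘L (s ∘L A j ∘L s')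
      - adjoint (C ∘L s') ∘L (C ∘L s')
      = adjoint s' * (adjoint s ∘L s) * s'
        - ∑ j, adjoint s' * (adjoint (A j) ∘L (adjoint s ∘L s) ∘L A j) * s'
        - adjoint s' * (adjoint C ∘L C) * s' := by
        rw [← h1']; simp only [hA, hC]
    _ = adjoint s' * ((adjoint s ∘L s)
          - ∑ j, adjoint (A j) ∘L (adjoint s ∘L s) ∘L A j
          - adjoint C ∘L C) * s' := by
        rw [mul_sub, mul_sub, sub_mul, sub_mul, Finset.mul_sum, Finset.sum_mul]
    _ = adjoint s' ∘L ((adjoint s ∘L s)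
          - ∑ j, adjoint (A j) ∘L (adjoint s ∘L s) ∘L A j
          - adjoint C ∘L C) ∘L s' := rfl

/-- Conjugating by `S⁻¹` and then by `S` gives back the original operator. -/
lemma conj_cancel (S : X ≃L[ℂ] X) (T : X →L[ℂ] X) :
    adjoint (S : X →L[ℂ] X) ∘L
      (adjoint (S.symm : X →L[ℂ] X) ∘L T ∘L (S.symm : X →L[ℂ] X)) ∘L
      (S : X →L[ℂ] X) = T := by
  set s : X →L[ℂ] X := (S : X →L[ℂ] X) with hs_def
  set s' : X →L[ℂ] X := (S.symm : X →L[ℂ] X) with hs'_def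
  have h1 : s' * s = 1 := by ext x; simp [hs_def, hs'_def, mul_apply]
  have hadj : adjoint s * adjoint s' = 1 := by
    rw [← star_eq_adjoint, ← star_eq_adjoint, ← star_mul, h1, star_one]
  have : adjoint s ∘L (adjoint s' ∘L T ∘L s') ∘L s
      = (adjoint s * adjoint s') * T * (s' * s) := by
    show adjoint s * (adjoint s' * T * s') * s = _
    noncomm_ring
  rw [this, hadj, h1, one_mul, mul_one]

/-- (C, A) is similar to a contractive pair iff the Stein inequality has a bounded
strictly positive-definite (positive and invertible) solution; (C, A) is similar to an
isometric pair iff the Stein equality has a bounded strictly positive-definite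
solution. -/
theorem stmt6 {d : ℕ} (C : X →L[ℂ] Y) (A : Fin d → X →L[ℂ] X) :
    ((∃ (C' : X →L[ℂ] Y) (A' : Fin d → X →L[ℂ] X), SimilarTo C A C' A' ∧
        ((1 : X →L[ℂ] X) - ∑ j, adjoint (A' j) ∘L A' j - adjoint C' ∘L C').IsPositive)
      ↔ ∃ H : X →L[ℂ] X, H.IsPositive ∧ IsUnit H ∧
          (H - ∑ j, adjoint (A j) ∘L H ∘L A j - adjoint C ∘L C).IsPositive) ∧
    ((∃ (C' : X →L[ℂ] Y) (A' : Fin d → X →L[ℂ] X), SimilarTo C A C' A' ∧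
        (1 : X →L[ℂ] X) - ∑ j, adjoint (A' j) ∘L A' j = adjoint C' ∘L C')
      ↔ ∃ H : X →L[ℂ] X, H.IsPositive ∧ IsUnit H ∧
          H - ∑ j, adjoint (A j) ∘L H ∘L A j = adjoint C ∘L C) := by
  -- common facts for the forward directions
  have forward : ∀ (S : X ≃L[ℂ] X),
      ((adjoint (S : X →L[ℂ] X) ∘L (S : X →L[ℂ] X)).IsPositive ∧
        IsUnit (adjoint (S : X →L[ℂ] X) ∘L (S : X →L[ℂ] X))) := by
    intro S
    set s : X →L[ℂ] X := (S : X →L[ℂ] X) with hs_def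
    constructor
    · have := (isPositive_one (E := X) (𝕜 := ℂ)).adjoint_conj s
      have h1 : adjoint s ∘L (1 : X →L[ℂ] X) ∘L s = adjoint s ∘L s := by
        ext x; simp
      rwa [h1] at this
    · have hs : IsUnit s := ⟨S.toUnit, rfl⟩
      have : IsUnit (star s * s) := hs.star.mul hs
      rwa [star_eq_adjoint] at this
  constructor
  · constructor
    · rintro ⟨C', A', ⟨S, hC', hA'⟩, hpos⟩
      set s : X →L[ℂ] X := (S : X →L[ℂ] X) with hs_def
      refine ⟨adjoint s ∘L s, (forward S).1, (forward S).2, ?_⟩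
      have hk := key_conj S C A
      have hC'' : C' = C ∘L (S.symm : X →L[ℂ] X) := hC'
      have hexpr : (1 : X →L[ℂ] X) - ∑ j, adjoint (A' j) ∘L A' j - adjoint C' ∘L C'
          = adjoint (S.symm : X →L[ℂ] X) ∘L
              ((adjoint s ∘L s) - ∑ j, adjoint (A j) ∘L (adjoint s ∘L s) ∘L A j
                - adjoint C ∘L C) ∘L (S.symm : X →L[ℂ] X) := by
        rw [hC'']
        simp only [hA']
        exact hk
      rw [hexpr] at hpos
      have := hpos.adjoint_conj s
      rwa [conj_cancel S] at this
    · rintro ⟨H, hHpos, hHunit, hStein⟩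
      -- square root of H
      have hH0 : (0 : X →L[ℂ] X) ≤ H := (nonneg_iff_isPositive H).mpr hHpos
      set R : X →L[ℂ] X := CFC.sqrt H with hR_def
      have hR0 : (0 : X →L[ℂ] X) ≤ R := CFC.sqrt_nonneg H
      have hRsa : star R = R := (IsSelfAdjoint.of_nonneg hR0).star_eq
      have hRR : R * R = H := CFC.sqrt_mul_sqrt_self H hH0
      have hRunit : IsUnit R := by
        obtain ⟨u, hu⟩ := hHunit
        have hleft : (↑u⁻¹ * R) * R = 1 := by
          rw [mul_assoc, hRR, ← hu, u.inv_mul]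
        have hright : R * (R * ↑u⁻¹) = 1 := by
          rw [← mul_assoc, hRR, ← hu, u.mul_inv]
        have heq : (↑u⁻¹ * R : X →L[ℂ] X) = R * ↑u⁻¹ := by
          calc (↑u⁻¹ * R : X →L[ℂ] X) = (↑u⁻¹ * R) * (R * (R * ↑u⁻¹)) := by
                rw [hright, mul_one]
            _ = ((↑u⁻¹ * R) * R) * (R * ↑u⁻¹) := by noncomm_ring
            _ = R * ↑u⁻¹ := by rw [hleft, one_mul]
        exact ⟨⟨R, R * ↑u⁻¹, hright, by rw [← heq, hleft]⟩, rfl⟩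
      set S : X ≃L[ℂ] X := ContinuousLinearEquiv.unitsEquiv ℂ X hRunit.unit with hS_def
      have hSR : (S : X →L[ℂ] X) = R := rfl
      have hH : adjoint (S : X →L[ℂ] X) ∘L (S : X →L[ℂ] X) = H := by
        rw [hSR, ← star_eq_adjoint, hRsa, ← mul_def, hRR]
      refine ⟨C ∘L (S.symm : X →L[ℂ] X),
        fun j => (S : X →L[ℂ] X) ∘L A j ∘L (S.symm : X →L[ℂ] X),
        ⟨S, rfl, fun j => rfl⟩, ?_⟩
      have hk := key_conj S C A
      rw [hH] at hk
      rw [hk]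
      exact hStein.adjoint_conj _
  · constructor
    · rintro ⟨C', A', ⟨S, hC', hA'⟩, heq⟩
      set s : X →L[ℂ] X := (S : X →L[ℂ] X) with hs_def
      refine ⟨adjoint s ∘L s, (forward S).1, (forward S).2, ?_⟩
      have hk := key_conj S C A
      have hexpr : (1 : X →L[ℂ] X) - ∑ j, adjoint (A' j) ∘L A' j - adjoint C' ∘L C'
          = adjoint (S.symm : X →L[ℂ] X) ∘L
              ((adjoint s ∘L s) - ∑ j, adjoint (A j) ∘L (adjoint s ∘L s) ∘L A j
                - adjoint C ∘L C) ∘L (S.symm : X →L[ℂ] X) := by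
        rw [hC']
        simp only [hA']
        exact hk
      have hzero : (1 : X →L[ℂ] X) - ∑ j, adjoint (A' j) ∘L A' j - adjoint C' ∘L C' = 0 :=
        sub_eq_zero.mpr heq
      rw [hexpr] at hzero
      have := congrArg (fun T => adjoint s ∘L T ∘L s) hzero
      rw [conj_cancel S] at this
      have h0 : adjoint s ∘L (0 : X →L[ℂ] X) ∘L s = 0 := by
        ext x; simp
      rw [h0] at this
      exact sub_eq_zero.mp this
    · rintro ⟨H, hHpos, hHunit, hStein⟩
      have hH0 : (0 : X →L[ℂ] X) ≤ H := (nonneg_iff_isPositive H).mpr hHpos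
      set R : X →L[ℂ] X := CFC.sqrt H with hR_def
      have hR0 : (0 : X →L[ℂ] X) ≤ R := CFC.sqrt_nonneg H
      have hRsa : star R = R := (IsSelfAdjoint.of_nonneg hR0).star_eq
      have hRR : R * R = H := CFC.sqrt_mul_sqrt_self H hH0
      have hRunit : IsUnit R := by
        obtain ⟨u, hu⟩ := hHunit
        have hleft : (↑u⁻¹ * R) * R = 1 := by
          rw [mul_assoc, hRR, ← hu, u.inv_mul]
        have hright : R * (R * ↑u⁻¹) = 1 := by
          rw [← mul_assoc, hRR, ← hu, u.mul_inv]
        have heq : (↑u⁻¹ * R : X →L[ℂ] X) = R * ↑u⁻¹ := by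
          calc (↑u⁻¹ * R : X →L[ℂ] X) = (↑u⁻¹ * R) * (R * (R * ↑u⁻¹)) := by
                rw [hright, mul_one]
            _ = ((↑u⁻¹ * R) * R) * (R * ↑u⁻¹) := by noncomm_ring
            _ = R * ↑u⁻¹ := by rw [hleft, one_mul]
        exact ⟨⟨R, R * ↑u⁻¹, hright, by rw [← heq, hleft]⟩, rfl⟩
      set S : X ≃L[ℂ] X := ContinuousLinearEquiv.unitsEquiv ℂ X hRunit.unit with hS_def
      have hSR : (S : X →L[ℂ] X) = R := rfl
      have hH : adjoint (S : X →L[ℂ] X) ∘L (S : X →L[ℂ] X) = H := by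
        rw [hSR, ← star_eq_adjoint, hRsa, ← mul_def, hRR]
      refine ⟨C ∘L (S.symm : X →L[ℂ] X),
        fun j => (S : X →L[ℂ] X) ∘L A j ∘L (S.symm : X →L[ℂ] X),
        ⟨S, rfl, fun j => rfl⟩, ?_⟩
      have hk := key_conj S C A
      rw [hH] at hk
      have hzero : H - ∑ j, adjoint (A j) ∘L H ∘L A j - adjoint C ∘L C = 0 :=
        sub_eq_zero.mpr hStein
      rw [hzero] at hk
      have h0 : adjoint (S.symm : X →L[ℂ] X) ∘L (0 : X →L[ℂ] X) ∘L
          (S.symm : X →L[ℂ] X) = 0 := by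
        ext x; simp
      rw [h0] at hk
      exact sub_eq_zero.mp hk

end
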